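/- Let E_1,…,E_n be quantum operations on ℂ^d, where E_i has Kraus operators {E_i^k : k = 1,…,n_i}. Then E_1,…,E_n are unambiguously distinguishable by a single use (possibly using an entangled ancilla) if and only if for every i = 1,…,n, supp(E_i) is not contained in the subspace Σ_{j≠i} supp(E_j) of M_d(ℂ). -/

import Mathlib

open Matrix Kronecker
open scoped ComplexOrder

noncomputable section

/-- A quantum operation on ℂ^d given by a finite family of Kraus operators
satisfying the completeness condition. -/
structure QuantumOp (d : ℕ) where
  m : ℕ
  K : Fin m → Matrix (Fin d) (Fin d) ℂ
  complete : ∑ k, (K k)ᴴ * K k = 1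

/-- The support of a quantum operation: the span of its Kraus operators. -/
def QuantumOp.supp {d : ℕ} (E : QuantumOp d) : Submodule ℂ (Matrix (Fin d) (Fin d) ℂ) :=
  Submodule.span ℂ (Set.range E.K)

/-- The output state (E ⊗ I)(|ψ⟩⟨ψ|) = Σ_k (E^k ⊗ I)|ψ⟩⟨ψ|(E^k ⊗ I)†. -/
def QuantumOp.output {d : ℕ} (E : QuantumOp d) (da : ℕ) (ψ : Fin d × Fin da → ℂ) :
    Matrix (Fin d × Fin da) (Fin d × Fin da) ℂ :=
  ∑ k, (E.K k ⊗ₖ (1 : Matrix (Fin da) (Fin da) ℂ)) * vecMulVec ψ (star ψ) *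
    (E.K k ⊗ₖ (1 : Matrix (Fin da) (Fin da) ℂ))ᴴ

/-- States σ_1, …, σ_n are unambiguously distinguishable if there is a POVM
{Π_0, Π_1, …, Π_n} with tr(Π_i σ_j) = 0 for i ≠ j and tr(Π_i σ_i) > 0. -/
def UnambiguouslyDistinguishable {μ : Type*} [Fintype μ] [DecidableEq μ] {n : ℕ}
    (σ : Fin n → Matrix μ μ ℂ) : Prop :=
  ∃ P0 : Matrix μ μ ℂ, ∃ P : Fin n → Matrix μ μ ℂ,
    P0.PosSemidef ∧ (∀ i, (P i).PosSemidef) ∧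
    (P0 + ∑ i, P i = 1) ∧
    (∀ i j, i ≠ j → (P i * σ j).trace = 0) ∧
    (∀ i, 0 < (P i * σ i).trace)

/-- The operations E_1, …, E_n are unambiguously distinguishable by a single use:
there are an ancilla dimension d_a ≥ 1 and a unit vector ψ ∈ ℂ^d ⊗ ℂ^{d_a} whose
output states are unambiguously distinguishable. -/
def UnambigSingleUse {d n : ℕ} (E : Fin n → QuantumOp d) : Prop :=
  ∃ da : ℕ, 0 < da ∧ ∃ ψ : Fin d × Fin da → ℂ,
    star ψ ⬝ᵥ ψ = 1 ∧
    UnambiguouslyDistinguishable (fun i => (E i).output da ψ)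

set_option linter.unusedSectionVars false

variable {m : Type*} [Fintype m] [DecidableEq m]

lemma mul_vmv_ct (M : Matrix m m ℂ) (a : m → ℂ) :
    M * vecMulVec a (star a) * Mᴴ = vecMulVec (M *ᵥ a) (star (M *ᵥ a)) := by
  ext i j
  simp only [mul_apply, vecMulVec_apply, conjTranspose_apply, Pi.star_apply, mulVec,
    dotProduct, Finset.sum_mul, Finset.mul_sum, star_sum, star_mul', star_star]
  exact Finset.sum_congr rfl fun k _ => Finset.sum_congr rfl fun l _ => by ring

lemma trace_mul_vmv (P : Matrix m m ℂ) (v : m → ℂ) :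
    (P * vecMulVec v (star v)).trace = star v ⬝ᵥ (P *ᵥ v) := by
  simp only [trace, diag, mul_apply, vecMulVec_apply, Pi.star_apply, dotProduct, mulVec,
    Finset.mul_sum]
  exact Finset.sum_congr rfl fun k _ => Finset.sum_congr rfl fun l _ => by ring

lemma quad_vmv (u x : m → ℂ) :
    star x ⬝ᵥ ((vecMulVec u (star u)) *ᵥ x) = star (star u ⬝ᵥ x) * (star u ⬝ᵥ x) := by
  simp only [dotProduct, mulVec, vecMulVec_apply, Pi.star_apply, star_sum, star_mul', star_star,
    Finset.mul_sum, Finset.sum_mul]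
  rw [Finset.sum_comm]
  exact Finset.sum_congr rfl fun k _ => Finset.sum_congr rfl fun l _ => by ring

def vecL (d da : ℕ) (ψ : Fin d × Fin da → ℂ) :
    Matrix (Fin d) (Fin d) ℂ →ₗ[ℂ] (Fin d × Fin da → ℂ) where
  toFun A := (A ⊗ₖ (1 : Matrix (Fin da) (Fin da) ℂ)) *ᵥ ψ
  map_add' A B := by simp only [Matrix.add_kronecker, Matrix.add_mulVec]
  map_smul' c A := by simp only [Matrix.smul_kronecker, Matrix.smul_mulVec, RingHom.id_apply]

lemma output_eq {d : ℕ} (E : QuantumOp d) (da : ℕ) (ψ : Fin d × Fin da → ℂ) :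
    E.output da ψ = ∑ k, vecMulVec (vecL d da ψ (E.K k)) (star (vecL d da ψ (E.K k))) := by
  unfold QuantumOp.output
  exact Finset.sum_congr rfl fun k _ => mul_vmv_ct _ _

lemma trace_mul_output {d : ℕ} (E : QuantumOp d) (da : ℕ) (ψ : Fin d × Fin da → ℂ)
    (P : Matrix (Fin d × Fin da) (Fin d × Fin da) ℂ) :
    (P * E.output da ψ).trace
      = ∑ k, star (vecL d da ψ (E.K k)) ⬝ᵥ (P *ᵥ (vecL d da ψ (E.K k))) := by
  rw [output_eq, Matrix.mul_sum, Matrix.trace_sum]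
  exact Finset.sum_congr rfl fun k _ => trace_mul_vmv _ _

lemma forward_dir {d n : ℕ} (E : Fin n → QuantumOp d) (h : UnambigSingleUse E) :
    ∀ i, ¬ ((E i).supp ≤ ⨆ j ≠ i, (E j).supp) := by
  intro i hle
  obtain ⟨da, hda, ψ, hψ, P0, P, hP0, hP, hsum, h0, hpos⟩ := h
  set Φ : Matrix (Fin d) (Fin d) ℂ →ₗ[ℂ] (Fin d × Fin da → ℂ) :=
    (Matrix.mulVecLin (P i)).comp (vecL d da ψ) with hΦ
  have hΦapp : ∀ A, Φ A = (P i) *ᵥ (vecL d da ψ A) := fun A => rfl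
  have hker : ∀ j, j ≠ i → (E j).supp ≤ LinearMap.ker Φ := by
    intro j hj
    rw [QuantumOp.supp, Submodule.span_le]
    rintro _ ⟨k, rfl⟩
    have htr := h0 i j (Ne.symm hj)
    simp only at htr
    rw [trace_mul_output] at htr
    have hnn : ∀ k ∈ Finset.univ,
        (0:ℂ) ≤ star (vecL d da ψ ((E j).K k)) ⬝ᵥ (P i *ᵥ (vecL d da ψ ((E j).K k))) :=
      fun k _ => (hP i).dotProduct_mulVec_nonneg _
    have hz := (Finset.sum_eq_zero_iff_of_nonneg hnn).mp htr k (Finset.mem_univ k)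
    have := ((hP i).dotProduct_mulVec_zero_iff _).mp hz
    simpa [LinearMap.mem_ker, hΦapp] using this
  have hWker : (⨆ j ≠ i, (E j).supp) ≤ LinearMap.ker Φ :=
    iSup_le fun j => iSup_le fun hj => hker j hj
  have hsupp : (E i).supp ≤ LinearMap.ker Φ := le_trans hle hWker
  have hzero : ((P i) * ((E i).output da ψ)).trace = 0 := by
    rw [trace_mul_output]
    refine Finset.sum_eq_zero fun k _ => ?_
    have hk : (E i).K k ∈ (E i).supp := Submodule.subset_span ⟨k, rfl⟩
    have : Φ ((E i).K k) = 0 := hsupp hk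
    rw [hΦapp] at this
    rw [this, dotProduct_zero]
  have := hpos i
  simp only at this
  rw [hzero] at this
  exact lt_irrefl _ this

section Backward

variable (d : ℕ)

/-- entangled state -/
def mes : Fin d × Fin d → ℂ :=
  fun p => if p.1 = p.2 then ((Real.sqrt d)⁻¹ : ℝ) else 0

lemma mes_norm (hd : 0 < d) : star (mes d) ⬝ᵥ (mes d) = 1 := by
  have key : ∀ p : Fin d × Fin d, star (mes d p) * mes d p
      = if p.1 = p.2 then (((d:ℝ)⁻¹ : ℝ) : ℂ) else 0 := by
    intro p
    unfold mes
    split_ifs with h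
    · rw [Complex.star_def, Complex.conj_ofReal, ← Complex.ofReal_mul,
        ← Real.sqrt_inv, Real.mul_self_sqrt (by positivity)]
    · simp
  rw [dotProduct]
  simp only [Pi.star_apply]
  rw [Finset.sum_congr rfl fun p _ => key p, Fintype.sum_prod_type]
  simp only [Finset.sum_ite_eq, Finset.mem_univ, if_true, Finset.sum_const,
    Finset.card_univ, Fintype.card_fin, nsmul_eq_mul]
  rw [show (((d:ℝ)⁻¹ : ℝ) : ℂ) = ((d:ℂ))⁻¹ by push_cast; ring]
  exact mul_inv_cancel₀ (by exact_mod_cast hd.ne')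

lemma vecL_mes_apply (A : Matrix (Fin d) (Fin d) ℂ) (p : Fin d × Fin d) :
    vecL d d (mes d) A p = (((Real.sqrt d)⁻¹ : ℝ) : ℂ) * A p.1 p.2 := by
  obtain ⟨i, j⟩ := p
  show ((A ⊗ₖ (1 : Matrix (Fin d) (Fin d) ℂ)) *ᵥ mes d) (i, j) = _
  rw [mulVec, dotProduct, Fintype.sum_prod_type]
  have key : ∀ k l : Fin d, (A ⊗ₖ (1 : Matrix (Fin d) (Fin d) ℂ)) (i,j) (k,l) * mes d (k,l)
      = if j = l then (if k = l then A i k * (((Real.sqrt d)⁻¹ : ℝ) : ℂ) else 0) else 0 := by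
    intro k l
    simp only [kroneckerMap_apply, Matrix.one_apply, mes]
    split_ifs with h1 h2 <;> simp_all
  rw [Finset.sum_congr rfl fun k _ => Finset.sum_congr rfl fun l _ => key k l]
  rw [Finset.sum_congr rfl fun k _ => Finset.sum_ite_eq Finset.univ j
    (fun l => if k = l then A i k * (((Real.sqrt d)⁻¹ : ℝ) : ℂ) else 0)]
  simp only [Finset.mem_univ, if_true]
  rw [Finset.sum_ite_eq' Finset.univ j (fun k => A i k * (((Real.sqrt d)⁻¹ : ℝ) : ℂ))]
  simp [mul_comm]

lemma vecL_mes_injective (hd : 0 < d) :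
    Function.Injective (vecL d d (mes d)) := by
  have hc : (((Real.sqrt d)⁻¹ : ℝ) : ℂ) ≠ 0 := by
    simp only [ne_eq, Complex.ofReal_eq_zero, inv_eq_zero]
    positivity
  intro A B hAB
  ext i j
  have := congrFun hAB (i, j)
  rw [vecL_mes_apply, vecL_mes_apply] at this
  exact mul_left_cancel₀ hc this

lemma sum_mulVec' {ι : Type*} (s : Finset ι) (P : ι → Matrix m m ℂ) (v : m → ℂ) :
    (∑ i ∈ s, P i) *ᵥ v = ∑ i ∈ s, P i *ᵥ v := by
  ext p
  simp only [mulVec, dotProduct, Finset.sum_apply, Matrix.sum_apply, Finset.sum_mul]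
  rw [Finset.sum_comm]

lemma dotProduct_sum' {ι : Type*} (s : Finset ι) (w : m → ℂ) (f : ι → m → ℂ) :
    w ⬝ᵥ (∑ i ∈ s, f i) = ∑ i ∈ s, w ⬝ᵥ f i := by
  simp only [dotProduct, Finset.sum_apply, Finset.mul_sum]
  rw [Finset.sum_comm]

lemma quad_smul_vmv (c : ℝ) (u x : m → ℂ) :
    star x ⬝ᵥ ((((c:ℝ):ℂ) • vecMulVec u (star u)) *ᵥ x)
      = ((c:ℝ):ℂ) * (star (star u ⬝ᵥ x) * (star u ⬝ᵥ x)) := by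
  rw [Matrix.smul_mulVec, dotProduct_smul, quad_vmv]
  rfl

lemma vmv_psd (c : ℝ) (hc : 0 ≤ c) (u : m → ℂ) :
    (((c:ℝ):ℂ) • vecMulVec u (star u)).PosSemidef := by
  refine Matrix.PosSemidef.of_dotProduct_mulVec_nonneg ?_ ?_
  · show _ᴴ = _
    rw [conjTranspose_smul]
    congr 1
    · rw [Complex.star_def, Complex.conj_ofReal]
    · ext i j
      simp only [conjTranspose_apply, vecMulVec_apply, Pi.star_apply, star_mul', star_star]
      ring
  · intro x
    rw [quad_smul_vmv]
    exact mul_nonneg (Complex.zero_le_real.2 hc) (star_mul_self_nonneg _)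

end Backward

lemma backward_dir {d n : ℕ} (hd : 0 < d) (E : Fin n → QuantumOp d)
    (h : ∀ i, ¬ ((E i).supp ≤ ⨆ j ≠ i, (E j).supp)) : UnambigSingleUse E := by
  classical
  refine ⟨d, hd, mes d, mes_norm d hd, ?_⟩
  have hA : ∀ i, ∃ A, A ∈ (E i).supp ∧ A ∉ (⨆ j ≠ i, (E j).supp) := by
    intro i
    exact SetLike.not_le_iff_exists.mp (h i)
  choose A hA1 hA2 using hA
  set toL : (Fin d × Fin d → ℂ) ≃ₗ[ℂ] EuclideanSpace ℂ (Fin d × Fin d) :=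
    (WithLp.linearEquiv 2 ℂ _).symm with htoL
  set L : Matrix (Fin d) (Fin d) ℂ →ₗ[ℂ] EuclideanSpace ℂ (Fin d × Fin d) :=
    toL.toLinearMap ∘ₗ vecL d d (mes d) with hL
  have hLinj : Function.Injective L := toL.injective.comp (vecL_mes_injective d hd)
  set S : Fin n → Submodule ℂ (EuclideanSpace ℂ (Fin d × Fin d)) :=
    fun i => Submodule.map L (⨆ j ≠ i, (E j).supp) with hS
  set x : Fin n → EuclideanSpace ℂ (Fin d × Fin d) := fun i => L (A i) with hx
  have hxS : ∀ i, x i ∉ S i := by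
    intro i hmem
    obtain ⟨B, hB, hBe⟩ := hmem
    exact hA2 i (by rwa [← hLinj hBe])
  set u : Fin n → EuclideanSpace ℂ (Fin d × Fin d) :=
    fun i => x i - (Submodule.orthogonalProjectionOnto (S i) (x i) : EuclideanSpace ℂ (Fin d × Fin d)) with hu
  have hu_orth : ∀ i, u i ∈ (S i)ᗮ := fun i => (S i).sub_starProjection_mem_orthogonal (x i)
  have hu_inner : ∀ i, ∀ w ∈ S i, inner (𝕜 := ℂ) (u i) w = 0 :=
    fun i w hw => Submodule.inner_left_of_mem_orthogonal hw (hu_orth i)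
  have hu_ne : ∀ i, u i ≠ 0 := by
    intro i h0
    apply hxS i
    have hxe : x i = (Submodule.orthogonalProjectionOnto (S i) (x i) : EuclideanSpace ℂ (Fin d × Fin d)) := by
      have := sub_eq_zero.mp h0
      exact this
    rw [hxe]
    exact Submodule.coe_mem _
  have hux : ∀ i, inner (𝕜 := ℂ) (u i) (x i) ≠ 0 := by
    intro i
    have hdecomp : inner (𝕜 := ℂ) (u i) (x i)
        = inner (𝕜 := ℂ) (u i) (u i)
          + inner (𝕜 := ℂ) (u i) ((Submodule.orthogonalProjectionOnto (S i) (x i) : EuclideanSpace ℂ (Fin d × Fin d))) := by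
      rw [← inner_add_right]
      congr 1
      exact (sub_add_cancel (x i) _).symm
    rw [hdecomp, hu_inner i _ (Submodule.coe_mem _), add_zero]
    exact fun hz => hu_ne i (inner_self_eq_zero.mp hz)
  set fu : Fin n → (Fin d × Fin d → ℂ) := fun i => WithLp.equiv 2 _ (u i) with hfu
  have hbridge : ∀ (v : EuclideanSpace ℂ (Fin d × Fin d)) (y : Fin d × Fin d → ℂ),
      star (WithLp.equiv 2 _ v) ⬝ᵥ y = inner (𝕜 := ℂ) v (toL y) := by
    intro v y
    rw [EuclideanSpace.inner_eq_star_dotProduct]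
    rw [dotProduct_comm]
    congr 1
  have hbridgeL : ∀ i (B : Matrix (Fin d) (Fin d) ℂ),
      star (fu i) ⬝ᵥ (vecL d d (mes d) B) = inner (𝕜 := ℂ) (u i) (L B) := by
    intro i B
    rw [hfu, hbridge]
    rfl
  set t : Fin n → ℝ := fun i => ‖u i‖^2 with ht
  have htpos : ∀ i, 0 < t i := fun i =>
    pow_pos (norm_pos_iff.mpr (hu_ne i)) 2
  set cc : Fin n → ℝ := fun i => ((n : ℝ) * t i)⁻¹ with hcc
  have hccpos : ∀ i, 0 < cc i := fun i =>
    inv_pos.2 (mul_pos (by exact_mod_cast i.pos) (htpos i))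
  set P : Fin n → Matrix (Fin d × Fin d) (Fin d × Fin d) ℂ :=
    fun i => ((cc i : ℝ) : ℂ) • vecMulVec (fu i) (star (fu i)) with hP
  refine ⟨1 - ∑ i, P i, P, ?_, fun i => vmv_psd (cc i) (hccpos i).le (fu i), sub_add_cancel _ _, ?_, ?_⟩
  · -- P0 is positive semidefinite
    refine Matrix.PosSemidef.of_dotProduct_mulVec_nonneg ?_ ?_
    · show (1 - ∑ i, P i)ᴴ = 1 - ∑ i, P i
      rw [conjTranspose_sub, conjTranspose_one, conjTranspose_sum]
      congr 1
      exact Finset.sum_congr rfl fun i _ => (vmv_psd (cc i) (hccpos i).le (fu i)).1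
    · intro xv
      set X : EuclideanSpace ℂ (Fin d × Fin d) := toL xv with hX
      set z : Fin n → ℂ := fun i => inner (𝕜 := ℂ) (u i) X with hz
      have hzi : ∀ i, star (fu i) ⬝ᵥ xv = z i := by
        intro i
        rw [hfu, hbridge, hz]
      have hterm : ∀ i, star xv ⬝ᵥ (P i *ᵥ xv) = ((cc i * Complex.normSq (z i) : ℝ) : ℂ) := by
        intro i
        rw [hP]
        simp only
        rw [quad_smul_vmv, hzi i, Complex.star_def, ← Complex.normSq_eq_conj_mul_self,
          ← Complex.ofReal_mul]
      have hxx : star xv ⬝ᵥ xv = ((‖X‖^2 : ℝ) : ℂ) := by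
        have hb := hbridge (toL xv) xv
        change star xv ⬝ᵥ xv = inner (𝕜 := ℂ) X X at hb
        rw [hb]
        show inner (𝕜 := ℂ) X X = _
        rw [inner_self_eq_norm_sq_to_K]
        norm_cast
      have hle : ∀ i, cc i * Complex.normSq (z i) ≤ (n:ℝ)⁻¹ * ‖X‖^2 := by
        intro i
        have h0 : ‖z i‖ ≤ ‖u i‖ * ‖X‖ := norm_inner_le_norm (u i) X
        have h1 : Complex.normSq (z i) ≤ t i * ‖X‖^2 := by
          have h2 : ‖z i‖^2 ≤ (‖u i‖ * ‖X‖)^2 :=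
            pow_le_pow_left₀ (norm_nonneg _) h0 2
          rw [mul_pow] at h2
          rw [← Complex.sq_norm]
          exact h2
        calc cc i * Complex.normSq (z i)
            ≤ cc i * (t i * ‖X‖^2) := mul_le_mul_of_nonneg_left h1 (hccpos i).le
          _ = (n:ℝ)⁻¹ * ‖X‖^2 := by
              show ((n:ℝ) * t i)⁻¹ * (t i * ‖X‖^2) = _
              rw [mul_inv, mul_assoc, inv_mul_cancel_left₀ (htpos i).ne']
      have hsum2 : ∑ i, (cc i * Complex.normSq (z i)) ≤ ‖X‖^2 := by
        have h2 : ∑ i, (cc i * Complex.normSq (z i)) ≤ (n:ℝ) * ((n:ℝ)⁻¹ * ‖X‖^2) := by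
          calc ∑ i, (cc i * Complex.normSq (z i))
              ≤ ∑ _i : Fin n, (n:ℝ)⁻¹ * ‖X‖^2 := Finset.sum_le_sum fun i _ => hle i
            _ = (n:ℝ) * ((n:ℝ)⁻¹ * ‖X‖^2) := by
                rw [Finset.sum_const, Finset.card_univ, Fintype.card_fin, nsmul_eq_mul]
        refine h2.trans ?_
        rcases Nat.eq_zero_or_pos n with hn | hn
        · simp [hn]
        · rw [← mul_assoc, mul_inv_cancel₀ (by positivity), one_mul]
      have hcalc : star xv ⬝ᵥ ((1 - ∑ i, P i) *ᵥ xv)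
          = ((‖X‖^2 - ∑ i, (cc i * Complex.normSq (z i)) : ℝ) : ℂ) := by
        rw [Matrix.sub_mulVec, Matrix.one_mulVec, dotProduct_sub, sum_mulVec', dotProduct_sum',
          Finset.sum_congr rfl fun i _ => hterm i, hxx, Complex.ofReal_sub, Complex.ofReal_sum]
      rw [hcalc]
      exact Complex.zero_le_real.2 (by linarith)
  · -- zero traces
    intro i j hij
    simp only
    rw [trace_mul_output]
    refine Finset.sum_eq_zero fun k _ => ?_
    rw [hP]
    rw [quad_smul_vmv, hbridgeL]
    have hmem : L ((E j).K k) ∈ S i := by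
      refine ⟨(E j).K k, ?_, rfl⟩
      have h1 : (E j).supp ≤ ⨆ j' ≠ i, (E j').supp :=
        le_iSup_of_le j (le_iSup_of_le (Ne.symm hij) le_rfl)
      exact h1 (Submodule.subset_span ⟨k, rfl⟩)
    rw [hu_inner i _ hmem]
    simp
  · -- positive traces
    intro i
    simp only
    rw [trace_mul_output]
    have hterm : ∀ k, star (vecL d d (mes d) ((E i).K k)) ⬝ᵥ (P i *ᵥ vecL d d (mes d) ((E i).K k))
        = ((cc i : ℝ) : ℂ) * (star (inner (𝕜 := ℂ) (u i) (L ((E i).K k)))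
            * inner (𝕜 := ℂ) (u i) (L ((E i).K k))) := by
      intro k
      rw [hP, quad_smul_vmv, hbridgeL]
    have hnonneg : ∀ k ∈ Finset.univ,
        (0:ℂ) ≤ star (vecL d d (mes d) ((E i).K k)) ⬝ᵥ (P i *ᵥ vecL d d (mes d) ((E i).K k)) := by
      intro k _
      rw [hterm k]
      exact mul_nonneg (Complex.zero_le_real.2 (hccpos i).le) (star_mul_self_nonneg _)
    have hexists : ∃ k, inner (𝕜 := ℂ) (u i) (L ((E i).K k)) ≠ 0 := by
      by_contra hall
      push_neg at hall
      apply hux i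
      have : ∀ B ∈ (E i).supp, inner (𝕜 := ℂ) (u i) (L B) = 0 := by
        intro B hB
        refine Submodule.span_induction ?_ ?_ ?_ ?_ hB
        · rintro _ ⟨k, rfl⟩; exact hall k
        · simp
        · intro a b _ _ ha hb
          rw [map_add, inner_add_right, ha, hb, add_zero]
        · intro c a _ ha
          rw [_root_.map_smul, inner_smul_right, ha, mul_zero]
      exact this (A i) (hA1 i)
    obtain ⟨k, hk⟩ := hexists
    refine Finset.sum_pos' hnonneg ⟨k, Finset.mem_univ k, ?_⟩
    rw [hterm k]
    refine mul_pos (Complex.zero_lt_real.2 (hccpos i)) ?_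
    rw [Complex.star_def, ← Complex.normSq_eq_conj_mul_self]
    exact Complex.zero_lt_real.2 (Complex.normSq_pos.2 hk)

/-- E_1, …, E_n are unambiguously distinguishable by a single use iff
for every i, supp(E_i) is not contained in Σ_{j ≠ i} supp(E_j). -/
theorem unambig_single_use_iff {d n : ℕ} (hd : 0 < d) (E : Fin n → QuantumOp d) :
    UnambigSingleUse E ↔
      ∀ i, ¬ ((E i).supp ≤ ⨆ j ≠ i, (E j).supp) :=
  ⟨fun h => forward_dir E h, fun h => backward_dir hd E h⟩
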